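/- arXiv:2201.07062 — 2 statements merged into one kernel-verified Lean document; each statement's English description precedes it below -/
import Mathlib

section
/- If a finite group G of odd order acts linearly on a nontrivial finite-dimensional vector space V over a finite field F of odd characteristic, then there exist two distinct G-orbits in V \ {0} of equal cardinality. -/
theorem exists_two_orbits_of_equal_size_odd {G F V : Type*} [Group G] [Finite G]
    (hGodd : Odd (Nat.card G))
    [Field F] [Finite F] (hFodd : Odd (ringChar F))
    [AddCommGroup V] [Module F V] [FiniteDimensional F V] [Nontrivial V]
    (ρ : Representation F G V) :
    -- there exist two distinct `G`-orbits in `V \ {0}` of the same cardinality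
    ∃ v w : V, v ≠ 0 ∧ w ≠ 0 ∧
      {u | ∃ g : G, ρ g v = u} ≠ {u | ∃ g : G, ρ g w = u} ∧
      Set.ncard {u | ∃ g : G, ρ g v = u} = Set.ncard {u | ∃ g : G, ρ g w = u} := by
  obtain ⟨v, hv⟩ := exists_ne (0 : V)
  have htwo : (2 : F) ≠ 0 := by
    apply Ring.two_ne_zero
    intro h
    rw [h] at hFodd
    exact (Nat.not_odd_iff_even.mpr even_two) hFodd
  refine ⟨v, -v, hv, neg_ne_zero.mpr hv, ?_, ?_⟩
  · intro h
    have h1 : (-v) ∈ {u | ∃ g : G, ρ g v = u} := by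
      rw [h]; exact ⟨1, by simp⟩
    obtain ⟨g, hg⟩ := h1
    have hpow : ∀ k : ℕ, ρ (g ^ k) v = (-1 : F) ^ k • v := by
      intro k
      induction k with
      | zero => simp
      | succ k ih =>
        rw [pow_succ, map_mul, Module.End.mul_apply, hg, map_neg, ih,
          pow_succ, mul_neg_one, neg_smul]
    have hodd : Odd (orderOf g) := by
      rcases Nat.even_or_odd (orderOf g) with he | ho
      · exact absurd hGodd (Nat.not_odd_iff_even.mpr (he.trans_dvd (orderOf_dvd_natCard g)))
      · exact ho
    have := hpow (orderOf g)
    rw [pow_orderOf_eq_one, map_one, Module.End.one_apply, hodd.neg_one_pow, neg_one_smul] at this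
    have h2 : (2 : F) • v = 0 := by
      rw [two_smul]
      nth_rewrite 1 [this]
      simp
    rcases smul_eq_zero.mp h2 with h | h
    · exact htwo h
    · exact hv h
  · have himg : {u | ∃ g : G, ρ g (-v) = u} = Neg.neg '' {u | ∃ g : G, ρ g v = u} := by
      ext u
      simp only [Set.mem_setOf_eq, Set.mem_image]
      constructor
      · rintro ⟨g, rfl⟩
        exact ⟨ρ g v, ⟨g, rfl⟩, by simp⟩
      · rintro ⟨x, ⟨g, rfl⟩, rfl⟩
        exact ⟨g, by simp⟩
    rw [himg, Set.ncard_image_of_injective _ neg_injective]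
end

section
/- Let G be a finite nonabelian solvable group and let N be a minimal normal subgroup of G which is a p-group for some prime p. If the pair (G,N) has property (D), then N is contained in the commutator subgroup G' of G; equivalently, every linear character of G restricts trivially to N. -/
open CategoryTheory
open scoped commutatorElement

/-- `χ : G → ℂ` is an irreducible (complex) character of `G`: it is the character of some
simple (= irreducible) finite-dimensional complex representation of `G`. -/
def IsIrrChar (G : Type) [Group G] (χ : G → ℂ) : Prop :=
  ∃ V : FDRep ℂ G, Simple V ∧ V.character = χ

/-- `χ ∈ Irr(G|N)`: `χ` is an irreducible character of `G` whose kernel does not contain `N`. -/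
def MemIrrRel (G : Type) [Group G] (N : Subgroup G) (χ : G → ℂ) : Prop :=
  IsIrrChar G χ ∧ ∃ x ∈ N, χ x ≠ χ 1

/-- The pair `(G, N)` has property (D): the characters in `Irr(G|N)` have pairwise
distinct degrees. -/
def PropertyD (G : Type) [Group G] (N : Subgroup G) : Prop :=
  ∀ χ ψ : G → ℂ, MemIrrRel G N χ → MemIrrRel G N ψ → χ 1 = ψ 1 → χ = ψ

section OneDimensional

variable {G : Type} [Group G]

/-- The one-dimensional representation attached to `φ : G →* ℂˣ`. -/
noncomputable def oneRep (φ : G →* ℂˣ) : Representation ℂ G ℂ where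
  toFun g := (φ g : ℂ) • LinearMap.id
  map_one' := by simp [Module.End.one_eq_id]
  map_mul' g h := by ext; simp [mul_smul, mul_comm]

/-- The one-dimensional representation attached to `φ : G →* ℂˣ`, as an `FDRep`. -/
noncomputable def oneFDRep (φ : G →* ℂˣ) : FDRep ℂ G := FDRep.of (oneRep φ)

lemma oneFDRep_character (φ : G →* ℂˣ) (g : G) :
    (oneFDRep φ).character g = (φ g : ℂ) := by
  have : (oneFDRep φ).ρ g = (φ g : ℂ) • LinearMap.id := rfl
  rw [FDRep.character, this]
  rw [map_smul, LinearMap.trace_id]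
  show (φ g : ℂ) • ((Module.finrank ℂ ℂ : ℂ)) = _
  simp

lemma oneFDRep_simple (φ : G →* ℂˣ) : Simple (oneFDRep φ) := by
  constructor
  intro Y f hmono
  constructor
  · -- IsIso f → f ≠ 0
    intro hiso hf0
    have h1 : 𝟙 (oneFDRep φ) = inv f ≫ (0 : Y ⟶ oneFDRep φ) := by
      rw [← hf0, IsIso.inv_hom_id]
    simp only [Limits.comp_zero] at h1
    have h2 := congrArg (fun (m : oneFDRep φ ⟶ oneFDRep φ) => m.hom (1 : ℂ)) h1
    simp only [Action.zero_hom, Action.id_hom] at h2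
    change (1 : ℂ) = (0 : ℂ) at h2
    exact one_ne_zero h2
  · intro hf0
    set fl : Y.V →ₗ[ℂ] ℂ := f.hom.hom.hom with hfl
    have hcomm : ∀ (g : G) (y : Y.V), fl (Y.ρ g y) = (φ g : ℂ) * fl y := by
      intro g y
      have := congrArg (fun (m : Y.V ⟶ (oneFDRep φ).V) => m y) (f.comm g)
      exact this
    have hker : ∀ (g : G), ∀ y ∈ LinearMap.ker fl, Y.ρ g y ∈ LinearMap.ker fl := by
      intro g y hy
      simp only [LinearMap.mem_ker] at hy ⊢
      exact (hcomm g y).trans (by rw [hy, mul_zero])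
    let ρK : Representation ℂ G (LinearMap.ker fl) :=
      { toFun := fun g => (Y.ρ g).restrict (hker g)
        map_one' := by
          ext x
          simp [LinearMap.restrict_coe_apply]
        map_mul' := fun g h => by
          ext x
          simp only [OneHom.toFun_eq_coe, OneHom.coe_mk, map_mul]
          rfl }
    let W : FDRep ℂ G := FDRep.of ρK
    let ι : W ⟶ Y :=
      { hom := FGModuleCat.ofHom (LinearMap.ker fl).subtype
        comm := fun g => FGModuleCat.hom_ext (LinearMap.subtype_comp_restrict (hker g)) }
    have hι0 : ι ≫ f = 0 := by
      ext x
      change fl ((LinearMap.ker fl).subtype x) = 0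
      exact x.2
    have hι : ι = 0 := by
      rw [← cancel_mono f, hι0, Limits.zero_comp]
    have hkerbot : LinearMap.ker fl = ⊥ := by
      rw [Submodule.eq_bot_iff]
      intro x hx
      have := congrArg (fun (m : W ⟶ Y) => m.hom ⟨x, hx⟩) hι
      exact this
    have hinj : Function.Injective fl := LinearMap.ker_eq_bot.mp hkerbot
    have hne : fl ≠ 0 := by
      intro h0
      apply hf0
      ext y
      change fl y = 0
      rw [h0]; rfl
    have hsurj : Function.Surjective fl := by
      obtain ⟨y, hy⟩ : ∃ y, fl y ≠ 0 := by
        by_contra hco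
        push_neg at hco
        exact hne (LinearMap.ext hco)
      intro c
      refine ⟨(c / fl y) • y, ?_⟩
      rw [map_smul, smul_eq_mul, div_mul_cancel₀ _ hy]
    let e : Y.V ≃ₗ[ℂ] ℂ := LinearEquiv.ofBijective fl ⟨hinj, hsurj⟩
    have h1 : ∀ z : ℂ, fl (e.symm z) = z := fun z => e.apply_symm_apply z
    let ginv : oneFDRep φ ⟶ Y :=
      { hom := FGModuleCat.ofHom (e.symm : ℂ →ₗ[ℂ] Y.V)
        comm := fun g => by
          refine FGModuleCat.hom_ext (LinearMap.ext fun c => ?_)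
          change e.symm ((φ g : ℂ) * (show ℂ from c)) = Y.ρ g (e.symm (show ℂ from c))
          apply hinj
          rw [h1]
          exact ((hcomm g (e.symm (show ℂ from c))).trans (by rw [h1])).symm }
    refine ⟨⟨ginv, ?_, ?_⟩⟩
    · ext y
      change e.symm (fl y) = y
      exact e.symm_apply_apply y
    · refine Action.Hom.ext (FGModuleCat.hom_ext (LinearMap.ext fun c => ?_))
      change fl (e.symm c) = c
      exact e.apply_symm_apply c

/-- The degree-1 character attached to `φ : G →* ℂˣ` is irreducible. -/
lemma isIrrChar_of_unitsHom (φ : G →* ℂˣ) : IsIrrChar G (fun g => (φ g : ℂ)) :=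
  ⟨oneFDRep φ, oneFDRep_simple φ, funext fun g => oneFDRep_character φ g⟩

/-- Two distinct linear characters which are both nontrivial on `N` contradict property (D). -/
lemma no_two_linear_chars {G : Type} [Group G] (N : Subgroup G) (hD : PropertyD G N)
    (φ ψ : G →* ℂˣ) {x y g : G} (hx : x ∈ N) (hy : y ∈ N)
    (hφ : φ x ≠ 1) (hψ : ψ y ≠ 1) (hne : φ g ≠ ψ g) : False := by
  have hmφ : MemIrrRel G N (fun g => (φ g : ℂ)) := by
    refine ⟨isIrrChar_of_unitsHom φ, x, hx, ?_⟩
    intro h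
    simp only [map_one, Units.val_one] at h
    exact hφ (Units.val_eq_one.mp h)
  have hmψ : MemIrrRel G N (fun g => (ψ g : ℂ)) := by
    refine ⟨isIrrChar_of_unitsHom ψ, y, hy, ?_⟩
    intro h
    simp only [map_one, Units.val_one] at h
    exact hψ (Units.val_eq_one.mp h)
  have hdeg : (fun g => ((φ g : ℂ))) 1 = (fun g => ((ψ g : ℂ))) 1 := by
    simp
  have heq := hD _ _ hmφ hmψ hdeg
  have := congrFun heq g
  exact hne (Units.ext this)

end OneDimensional

theorem le_commutator_of_propertyD {G : Type} [Group G] [Finite G]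
    (hsolv : IsSolvable G) (hnonab : ∃ a b : G, a * b ≠ b * a)
    (N : Subgroup G) (hNnorm : N.Normal) (hNbot : N ≠ ⊥)
    (hNmin : ∀ M : Subgroup G, M.Normal → M ≠ ⊥ → M ≤ N → M = N)
    (p : ℕ) (hp : p.Prime) (hNp : IsPGroup p N)
    (hD : PropertyD G N) :
    N ≤ commutator G := by
  by_contra hnle
  obtain ⟨n, hnN, hn⟩ : ∃ n, n ∈ N ∧ n ∉ commutator G := by
    by_contra hc
    push_neg at hc
    exact hnle fun x hx => hc x hx
  haveI : NeZero (Monoid.exponent (Abelianization G)) :=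
    ⟨(Monoid.exponent_pos.mpr .of_finite).ne'⟩
  have hsep : ∀ a : Abelianization G, a ≠ 1 → ∃ θ : Abelianization G →* ℂˣ, θ a ≠ 1 :=
    fun a ha => CommGroup.exists_apply_ne_one_of_hasEnoughRootsOfUnity _ ℂ ha
  have hπn : Abelianization.of n ≠ 1 := fun he => hn ((QuotientGroup.eq_one_iff n).mp he)
  by_cases h2 : ∃ (θ : Abelianization G →* ℂˣ) (x : G),
      x ∈ N ∧ (θ (Abelianization.of x)) ^ 2 ≠ 1
  · -- there is a linear character whose value on some element of `N` has order > 2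
    obtain ⟨θ, x, hxN, hsq⟩ := h2
    have hu1 : θ (Abelianization.of x) ≠ 1 := fun h => hsq (by rw [h, one_pow])
    set φ : G →* ℂˣ := θ.comp Abelianization.of with hφdef
    have hφx : φ x = θ (Abelianization.of x) := rfl
    have hψx : (φ⁻¹ : G →* ℂˣ) x = (θ (Abelianization.of x))⁻¹ := rfl
    refine no_two_linear_chars N hD φ φ⁻¹ (g := x) hxN hxN ?_ ?_ ?_
    · rw [hφx]; exact hu1
    · rw [hψx]; exact inv_ne_one.mpr hu1
    · rw [hφx, hψx]
      intro h
      apply hsq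
      rw [pow_two]
      nth_rewrite 2 [h]
      rw [mul_inv_cancel]
  · push_neg at h2
    have hsq : ∀ x ∈ N, (Abelianization.of x) ^ 2 = 1 := by
      intro x hx
      by_contra hc
      obtain ⟨θ, hθ⟩ := hsep _ hc
      exact hθ (by rw [map_pow]; exact h2 θ x hx)
    obtain ⟨χ, hχ⟩ := hsep _ hπn
    by_cases hall : ∀ a : Abelianization G, a ∈ Subgroup.zpowers (Abelianization.of n)
    · -- `G/G'` has order 2, generated by the image of `n`; pure group theory contradiction
      have hn2 : (Abelianization.of n) ^ (2 : ℤ) = 1 := by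
        rw [show (2 : ℤ) = ((2 : ℕ) : ℤ) from rfl, zpow_natCast]
        exact hsq n hnN
      have hpow : ∀ k : ℤ, (Abelianization.of n) ^ k = 1 ∨
          (Abelianization.of n) ^ k = Abelianization.of n := by
        intro k
        rcases Int.even_or_odd k with ⟨m, hm⟩ | ⟨m, hm⟩
        · left
          rw [hm, ← two_mul, zpow_mul, hn2, one_zpow]
        · right
          rw [hm, zpow_add, zpow_mul, hn2, one_zpow, one_mul, zpow_one]
      have hof : ∀ g : G, Abelianization.of g = 1 ∨ Abelianization.of g = Abelianization.of n := by
        intro g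
        obtain ⟨k, hk⟩ := Subgroup.mem_zpowers_iff.mp (hall (Abelianization.of g))
        rw [← hk]
        exact hpow k
      -- decomposition of an arbitrary element
      have hdecomp : ∀ g : G, ∃ c ∈ commutator G, g = c ∨ g = c * n := by
        intro g
        rcases hof g with h | h
        · exact ⟨g, (QuotientGroup.eq_one_iff g).mp h, Or.inl rfl⟩
        · have h1 : Abelianization.of (g * n⁻¹) = 1 := by
            rw [map_mul, map_inv, h, mul_inv_cancel]
          exact ⟨g * n⁻¹, (QuotientGroup.eq_one_iff _).mp h1, Or.inr (by group)⟩
      -- `N ⊓ G' = ⊥`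
      have hint : N ⊓ commutator G = ⊥ := by
        by_contra hne
        have heq := hNmin (N ⊓ commutator G) inferInstance hne inf_le_left
        exact hnle ((le_of_eq heq.symm).trans inf_le_right)
      -- `n` is central
      have hcen : ∀ g : G, g * n = n * g := by
        intro g
        have hcomm : ⁅g, n⁆ ∈ commutator G := by
          rw [commutator_def]
          exact Subgroup.commutator_mem_commutator (Subgroup.mem_top g) (Subgroup.mem_top n)
        have hmem : ⁅g, n⁆ ∈ N := by
          rw [commutatorElement_def]
          exact N.mul_mem (hNnorm.conj_mem n hnN g) (N.inv_mem hnN)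
        have : ⁅g, n⁆ ∈ N ⊓ commutator G := ⟨hmem, hcomm⟩
        rw [hint, Subgroup.mem_bot] at this
        exact commutatorElement_eq_one_iff_mul_comm.mp this
      have hconj : ∀ d : G, n * d * n⁻¹ = d := by
        intro d
        rw [← hcen d, mul_inv_cancel_right]
      have key1 : ∀ c d : G, ⁅c * n, d⁆ = ⁅c, d⁆ := by
        intro c d
        simp only [commutatorElement_def, mul_inv_rev]
        congr 1
        rw [show c * n * d * (n⁻¹ * c⁻¹) = c * (n * d * n⁻¹) * c⁻¹ by group, hconj d]
      have key2 : ∀ c d : G, ⁅c, d * n⁆ = ⁅c, d⁆ := by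
        intro c d
        rw [← commutatorElement_inv, key1, commutatorElement_inv]
      -- `G' ≤ G''`
      have hd : commutator G ≤ derivedSeries G 2 := by
        rw [commutator_def, Subgroup.commutator_le]
        intro g1 _ g2 _
        obtain ⟨c1, hc1, hg1⟩ := hdecomp g1
        obtain ⟨c2, hc2, hg2⟩ := hdecomp g2
        have hmem : ⁅c1, c2⁆ ∈ derivedSeries G 2 := by
          rw [derivedSeries_succ]
          exact Subgroup.commutator_mem_commutator
            ((derivedSeries_one G) ▸ hc1) ((derivedSeries_one G) ▸ hc2)
        rcases hg1 with h | h <;> rcases hg2 with h' | h' <;> rw [h, h']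
        · exact hmem
        · rw [key2]; exact hmem
        · rw [key1]; exact hmem
        · rw [key2, key1]; exact hmem
      -- derived series is constant from step 1 on
      have hone : ∀ k : ℕ, derivedSeries G 1 ≤ derivedSeries G (k + 1) := by
        intro k
        induction k with
        | zero => exact le_refl _
        | succ m ih =>
          calc derivedSeries G 1 = commutator G := derivedSeries_one G
          _ ≤ derivedSeries G 2 := hd
          _ = ⁅derivedSeries G 1, derivedSeries G 1⁆ := by
              rw [derivedSeries_succ, derivedSeries_one]
          _ ≤ ⁅derivedSeries G (m + 1), derivedSeries G (m + 1)⁆ :=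
              Subgroup.commutator_mono ih ih
          _ = derivedSeries G (m + 2) := (derivedSeries_succ G (m + 1)).symm
      obtain ⟨k, hk⟩ := hsolv.solvable
      have hbot : derivedSeries G 1 = ⊥ := by
        cases k with
        | zero =>
          have h0 : (⊤ : Subgroup G) = ⊥ := by rw [← derivedSeries_zero G]; exact hk
          exact le_bot_iff.mp (h0 ▸ le_top)
        | succ m => exact le_bot_iff.mp (hk ▸ hone m)
      have hcommbot : commutator G = ⊥ := (derivedSeries_one G).symm.trans hbot
      obtain ⟨a, b, hab⟩ := hnonab
      apply hab
      have hmemab : ⁅a, b⁆ ∈ commutator G := by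
        rw [commutator_def]
        exact Subgroup.commutator_mem_commutator (Subgroup.mem_top a) (Subgroup.mem_top b)
      rw [hcommbot, Subgroup.mem_bot] at hmemab
      exact commutatorElement_eq_one_iff_mul_comm.mp hmemab
    · -- there is an element of the abelianization outside of `⟨of n⟩`
      push_neg at hall
      obtain ⟨a, ha⟩ := hall
      haveI : NeZero (Monoid.exponent
          (Abelianization G ⧸ Subgroup.zpowers (Abelianization.of n))) :=
        ⟨(Monoid.exponent_pos.mpr .of_finite).ne'⟩
      have hqa : (QuotientGroup.mk' (Subgroup.zpowers (Abelianization.of n))) a ≠ 1 := by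
        intro h
        exact ha ((QuotientGroup.eq_one_iff a).mp h)
      obtain ⟨μ0, hμ0⟩ :=
        CommGroup.exists_apply_ne_one_of_hasEnoughRootsOfUnity
          (Abelianization G ⧸ Subgroup.zpowers (Abelianization.of n)) ℂ hqa
      set μ : Abelianization G →* ℂˣ :=
        μ0.comp (QuotientGroup.mk' (Subgroup.zpowers (Abelianization.of n))) with hμdef
      have hμn : μ (Abelianization.of n) = 1 := by
        have : (QuotientGroup.mk' (Subgroup.zpowers (Abelianization.of n)))
            (Abelianization.of n) = 1 :=
          (QuotientGroup.eq_one_iff _).mpr (Subgroup.mem_zpowers _)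
        rw [hμdef, MonoidHom.comp_apply, this, map_one]
      have hμa : μ a ≠ 1 := hμ0
      obtain ⟨g, hg⟩ : ∃ g : G, Abelianization.of g = a :=
        QuotientGroup.mk'_surjective _ a
      set φ : G →* ℂˣ := χ.comp Abelianization.of with hφdef
      set ψ : G →* ℂˣ := (χ * μ).comp Abelianization.of with hψdef
      have hφn : φ n = χ (Abelianization.of n) := rfl
      have hψn : ψ n = χ (Abelianization.of n) * μ (Abelianization.of n) := rfl
      refine no_two_linear_chars N hD φ ψ (g := g) hnN hnN ?_ ?_ ?_
      · rw [hφn]; exact hχ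
      · rw [hψn, hμn, mul_one]; exact hχ
      · have hφg : φ g = χ a := by rw [hφdef, MonoidHom.comp_apply, hg]
        have hψg : ψ g = χ a * μ a := by
          rw [hψdef, MonoidHom.comp_apply, hg, MonoidHom.mul_apply]
        rw [hφg, hψg]
        intro h
        exact hμa (left_eq_mul.mp h)
end
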